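/- Suppose γ < ρ < √γ with 0 ≤ γ < 1, ρ² y² < c, and λ < (ρ/(1-ρ)) ‖x‖₂². Then c > (y - xᵀ w*)², where w* = (λ I + x xᵀ)⁻¹ x y. -/

import Mathlib

open Matrix

lemma vmv_mul_vmv {d : ℕ} (x : Fin d → ℝ) :
    vecMulVec x x * vecMulVec x x = (x ⬝ᵥ x) • vecMulVec x x := by
  ext i j
  simp only [Matrix.mul_apply, vecMulVec_apply, Matrix.smul_apply, dotProduct, smul_eq_mul,
    Finset.sum_mul]
  exact Finset.sum_congr rfl fun k _ => by ring

lemma vmv_mulVec {d : ℕ} (x : Fin d → ℝ) :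
    (vecMulVec x x).mulVec x = (x ⬝ᵥ x) • x := by
  ext i
  simp only [Matrix.mulVec, vecMulVec_apply, dotProduct, Pi.smul_apply, smul_eq_mul,
    Finset.mul_sum]
  rw [Finset.sum_mul]
  exact Finset.sum_congr rfl (fun k _ => by ring)

theorem human_error_gt_machine_error {d : ℕ}
    (x : Fin d → ℝ) (y c γ ρ lam : ℝ)
    (hγ0 : 0 ≤ γ) (hγ1 : γ < 1)
    (hγρ : γ < ρ) (hρ : ρ < Real.sqrt γ)
    (hc : ρ ^ 2 * y ^ 2 < c)
    (hlam0 : 0 < lam)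
    (hlam : lam < ρ / (1 - ρ) * ∑ i, x i ^ 2) :
    c > (y - x ⬝ᵥ (y • (lam • (1 : Matrix (Fin d) (Fin d) ℝ) + vecMulVec x x)⁻¹.mulVec x)) ^ 2 := by
  set s : ℝ := x ⬝ᵥ x with hs
  have hsum : (∑ i, x i ^ 2) = s := by
    simp [hs, dotProduct, sq]
  have hs0 : 0 ≤ s := by
    rw [← hsum]; positivity
  have hρ0 : 0 < ρ := lt_of_le_of_lt hγ0 hγρ
  have hρ1 : ρ < 1 := lt_of_lt_of_le hρ (by
    nlinarith [Real.sq_sqrt hγ0, Real.sqrt_nonneg γ])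
  have hls : 0 < lam + s := by linarith
  have hlamρ : lam < ρ * (lam + s) := by
    have h1 : lam * (1 - ρ) < ρ * s := by
      have := hlam
      rw [hsum] at this
      have h1ρ : (1:ℝ) - ρ ≠ 0 := by linarith
      have h2 : ρ / (1 - ρ) * s * (1 - ρ) = ρ * s := by
        field_simp
      nlinarith [this]
    nlinarith
  set M : Matrix (Fin d) (Fin d) ℝ := vecMulVec x x with hM
  set A : Matrix (Fin d) (Fin d) ℝ := lam • (1 : Matrix (Fin d) (Fin d) ℝ) + M with hA
  set B : Matrix (Fin d) (Fin d) ℝ :=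
    lam⁻¹ • ((1 : Matrix (Fin d) (Fin d) ℝ) - (lam + s)⁻¹ • M) with hB
  have hAB : A * B = 1 := by
    rw [hA, hB]
    rw [Matrix.mul_smul, Matrix.mul_sub, Matrix.mul_one, Matrix.mul_smul,
      Matrix.add_mul, Matrix.smul_mul, Matrix.one_mul, vmv_mul_vmv, ← hs, ← hM]
    match_scalars <;> field_simp <;> ring
  have hinv : A⁻¹ = B := Matrix.inv_eq_right_inv hAB
  have hmv : A⁻¹.mulVec x = (lam + s)⁻¹ • x := by
    rw [hinv, hB]
    rw [Matrix.smul_mulVec, Matrix.sub_mulVec, Matrix.smul_mulVec,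
      Matrix.one_mulVec, hM, vmv_mulVec, ← hs]
    ext i
    simp only [Pi.smul_apply, Pi.sub_apply, smul_eq_mul]
    field_simp
    ring
  rw [hmv]
  have hdot : x ⬝ᵥ (y • (lam + s)⁻¹ • x) = y * ((lam + s)⁻¹ * s) := by
    rw [dotProduct_smul, dotProduct_smul, hs]
    simp [smul_eq_mul, mul_comm, mul_left_comm]
  rw [hdot]
  have hval : y - y * ((lam + s)⁻¹ * s) = lam / (lam + s) * y := by
    field_simp
    ring
  rw [hval]
  have hfrac : 0 ≤ lam / (lam + s) := by positivity
  have hfracρ : lam / (lam + s) < ρ := by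
    rw [div_lt_iff₀ hls]; exact hlamρ
  have : (lam / (lam + s) * y) ^ 2 ≤ ρ ^ 2 * y ^ 2 := by
    have h1 : (lam / (lam + s)) ^ 2 ≤ ρ ^ 2 := by nlinarith
    nlinarith [sq_nonneg y]
  linarith
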